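/- Let n ≥ 2 be an integer, t ∈ (0,1), and μ ∈ [μ₀(n,t), -t/n], where μ₀(n,t) = ((3-2n)t + 1 - 2n + sqrt((1-t)((4n-5)t + 4n²-4n+1)))/(2(n-1)²). Set θ = -(t + (n-1)μ), q₁ = (1-θ)/(1-t), and q̃₃ = ((1+t+(n-1)μ)/(n+1))·((1+n+(n-1)(t+nμ))/(1-t)). Then q̃₃ ≤ q₁. -/
import Mathlib


/-- Let `n ≥ 2`, `t ∈ (0,1)`, `μ ∈ [μ₀(n,t), -t/n]`, `θ = -(t+(n-1)μ)`,
`q₁ = (1-θ)/(1-t)` and `q̃₃ = ((1+t+(n-1)μ)/(n+1))·((1+n+(n-1)(t+nμ))/(1-t))`.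
Then `q̃₃ ≤ q₁`. -/
theorem stmt6 (n : ℕ) (hn : 2 ≤ n) (t μ : ℝ) (ht0 : 0 < t) (ht1 : t < 1)
    (hμl : ((3 - 2*(n:ℝ))*t + 1 - 2*(n:ℝ) +
        Real.sqrt ((1 - t) * ((4*(n:ℝ) - 5)*t + 4*(n:ℝ)^2 - 4*(n:ℝ) + 1)))
      / (2*((n:ℝ) - 1)^2) ≤ μ)
    (hμu : μ ≤ -t/(n:ℝ))
    (θ q₁ q₃ : ℝ)
    (hθ : θ = -(t + ((n:ℝ) - 1)*μ))
    (hq₁ : q₁ = (1 - θ)/(1 - t))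
    (hq₃ : q₃ = ((1 + t + ((n:ℝ) - 1)*μ)/((n:ℝ) + 1)) *
      ((1 + (n:ℝ) + ((n:ℝ) - 1)*(t + (n:ℝ)*μ))/(1 - t))) :
    q₃ ≤ q₁ := by
  have hn2 : (2:ℝ) ≤ (n:ℝ) := by exact_mod_cast hn
  have hnpos : (0:ℝ) < (n:ℝ) := by linarith
  have h1t : (0:ℝ) < 1 - t := by linarith
  -- sqrt lower bound
  have hsq : (1 - t) ≤ Real.sqrt ((1 - t) * ((4*(n:ℝ) - 5)*t + 4*(n:ℝ)^2 - 4*(n:ℝ) + 1)) := by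
    have h1 : (1 - t) * (1 - t) ≤ (1 - t) * ((4*(n:ℝ) - 5)*t + 4*(n:ℝ)^2 - 4*(n:ℝ) + 1) := by
      have hc : (0:ℝ) ≤ (4*(n:ℝ) - 4)*t + 4*(n:ℝ)^2 - 4*(n:ℝ) := by nlinarith
      nlinarith [mul_nonneg (le_of_lt h1t) hc]
    calc (1 - t) = Real.sqrt ((1-t)*(1-t)) := by
          rw [Real.sqrt_mul_self (le_of_lt h1t)]
      _ ≤ _ := Real.sqrt_le_sqrt h1
  have hden : (0:ℝ) < 2*((n:ℝ) - 1)^2 := by nlinarith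
  have hA : 0 ≤ 1 + t + ((n:ℝ) - 1)*μ := by
    rw [div_le_iff₀ hden] at hμl
    nlinarith
  have htn : t + (n:ℝ)*μ ≤ 0 := by
    rw [le_div_iff₀ hnpos] at hμu
    nlinarith
  rw [hq₃, hq₁, hθ]
  rw [div_mul_div_comm]
  rw [show (1 - -(t + ((n:ℝ) - 1)*μ)) = 1 + t + ((n:ℝ) - 1)*μ by ring]
  rw [div_le_div_iff₀ (by positivity) h1t]
  nlinarith [mul_nonneg hA (mul_nonneg (by linarith : (0:ℝ) ≤ (n:ℝ) - 1) (neg_nonneg.2 htn)),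
    mul_pos h1t h1t]
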